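/- Let X be a complete metric space, F = {f₁,...,fₙ} a GIFS of order m with attractor A_F, and let K₀,...,K_{m-1} be nonempty compact subsets of X. Define the sequence (K_k) of nonempty compact sets by K_{k+m} := F(K_k,...,K_{k+m-1}), where F(D₀,...,D_{m-1}) := ⋃ᵢ fᵢ(D₀ × ... × D_{m-1}). Then K_k → A_F in the Hausdorff–Pompeiu metric. -/

import Mathlib

open TopologicalSpace Filter

open Metric EMetric

/-- For a GIFS `F = {f₁,...,fₙ}` of order `m` with attractor `A`, any sequence of
nonempty compact sets satisfying `K_{k+m} = F(K_k, ..., K_{k+m-1})` converges to `A`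
in the Hausdorff–Pompeiu metric. -/
theorem stmt4 {X : Type*} [MetricSpace X] [CompleteSpace X]
    {n m : ℕ} (hn : 0 < n) (hm : 0 < m)
    (φ : ℝ → ℝ) (hφ_mono : MonotoneOn φ (Set.Ici 0))
    (hφ_nonneg : ∀ t, 0 ≤ t → 0 ≤ φ t)
    (hφ_iter : ∀ t > 0, Tendsto (fun k => φ^[k] t) atTop (nhds 0))
    (f : Fin n → (Fin m → X) → X)
    (hf : ∀ i, ∀ x y : Fin m → X, dist (f i x) (f i y) ≤ φ (dist x y))
    (A : NonemptyCompacts X)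
    (hA : (A : Set X) = ⋃ i, f i '' Set.pi Set.univ (fun _ : Fin m => (A : Set X)))
    (K : ℕ → NonemptyCompacts X)
    (hK : ∀ k, (K (k + m) : Set X) =
        ⋃ i, f i '' Set.pi Set.univ (fun j : Fin m => (K (k + j) : Set X))) :
    Tendsto K atTop (nhds A) := by
  -- φ t < t for t > 0
  have hφ_lt : ∀ t > 0, φ t < t := by
    intro t ht
    by_contra hle
    push_neg at hle
    have hiter : ∀ k, t ≤ φ^[k] t := by
      intro k
      induction k with
      | zero => simp
      | succ k ih =>
        rw [Function.iterate_succ_apply']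
        calc t ≤ φ t := hle
        _ ≤ φ (φ^[k] t) := hφ_mono (le_of_lt ht) (le_trans ht.le ih) ih
    have h2 : t ≤ 0 := ge_of_tendsto (hφ_iter t ht) (Filter.Eventually.of_forall hiter)
    linarith
  have hφ0 : φ 0 = 0 := by
    by_contra h0
    have hpos : 0 < φ 0 := lt_of_le_of_ne (hφ_nonneg 0 le_rfl) (Ne.symm h0)
    have h1 : φ 0 ≤ φ (φ 0) := hφ_mono (le_refl (0:ℝ)) (hφ_nonneg 0 le_rfl) (hφ_nonneg 0 le_rfl)
    exact absurd (lt_of_le_of_lt h1 (hφ_lt _ hpos)) (lt_irrefl _)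
  have hφ_le : ∀ t, 0 ≤ t → φ t ≤ t := by
    intro t ht
    rcases eq_or_lt_of_le ht with h | h
    · rw [← h, hφ0]
    · exact (hφ_lt t h).le
  have hfin : ∀ s t : NonemptyCompacts X, hausdorffEdist (s : Set X) (t : Set X) ≠ ⊤ :=
    fun s t => hausdorffEdist_ne_top_of_nonempty_of_bounded s.nonempty t.nonempty
      s.isCompact.isBounded t.isCompact.isBounded
  set d : ℕ → ℝ := fun k => hausdorffDist (K k : Set X) (A : Set X) with hd
  -- key step estimate
  have hstep : ∀ k r, 0 ≤ r → (∀ j : Fin m, d (k + j) ≤ r) → d (k + m) ≤ φ r := by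
    intro k r hr hwin
    have hφr : 0 ≤ φ r := hφ_nonneg r hr
    apply hausdorffDist_le_of_mem_dist hφr
    · intro x hx
      rw [hK k] at hx
      obtain ⟨i, z, hz, rfl⟩ := by simpa only [Set.mem_iUnion, Set.mem_image] using hx
      have hzj : ∀ j : Fin m, z j ∈ (K (k + j) : Set X) := fun j => hz j (Set.mem_univ j)
      have hw : ∀ j : Fin m, ∃ y ∈ (A : Set X), dist (z j) y ≤ r := by
        intro j
        obtain ⟨y, hyA, hy⟩ := A.isCompact.exists_infDist_eq_dist A.nonempty (z j)
        refine ⟨y, hyA, ?_⟩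
        rw [← hy]
        exact le_trans (infDist_le_hausdorffDist_of_mem (hzj j) (hfin _ _)) (hwin j)
      choose w hwA hwd using hw
      refine ⟨f i w, ?_, ?_⟩
      · rw [hA]
        exact Set.mem_iUnion.2 ⟨i, Set.mem_image_of_mem _ (fun j _ => hwA j)⟩
      · have hdzw : dist z w ≤ r := (dist_pi_le_iff hr).2 hwd
        exact le_trans (hf i z w) (hφ_mono dist_nonneg hr hdzw)
    · intro x hx
      rw [hA] at hx
      obtain ⟨i, z, hz, rfl⟩ := by simpa only [Set.mem_iUnion, Set.mem_image] using hx
      have hzj : ∀ j : Fin m, z j ∈ (A : Set X) := fun j => hz j (Set.mem_univ j)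
      have hw : ∀ j : Fin m, ∃ y ∈ (K (k + j) : Set X), dist (z j) y ≤ r := by
        intro j
        obtain ⟨y, hyK, hy⟩ := (K (k + j)).isCompact.exists_infDist_eq_dist
          (K (k + j)).nonempty (z j)
        refine ⟨y, hyK, ?_⟩
        rw [← hy]
        refine le_trans (infDist_le_hausdorffDist_of_mem (hzj j) ?_) ?_
        · rw [hausdorffEdist_comm]; exact hfin _ _
        · rw [hausdorffDist_comm]; exact hwin j
      choose w hwK hwd using hw
      refine ⟨f i w, ?_, ?_⟩
      · rw [hK k]
        exact Set.mem_iUnion.2 ⟨i, Set.mem_image_of_mem _ (fun j _ => hwK j)⟩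
      · have hdzw : dist z w ≤ r := (dist_pi_le_iff hr).2 hwd
        rw [dist_comm]
        exact le_trans (hf i w z) (by rw [dist_comm]; exact hφ_mono dist_nonneg hr hdzw)
  -- bound B
  have hrange : (Finset.range m).Nonempty := Finset.nonempty_range_iff.2 hm.ne'
  set B : ℝ := (Finset.range m).sup' hrange d with hB
  have hB0 : 0 ≤ B := le_trans hausdorffDist_nonneg
    (Finset.le_sup' d (Finset.mem_range.2 hm))
  have hbound : ∀ k, d k ≤ B := by
    intro k
    induction k using Nat.strong_induction_on with
    | _ k ih =>
      rcases lt_or_ge k m with hk | hk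
      · exact Finset.le_sup' d (Finset.mem_range.2 hk)
      · have hkm : k - m + m = k := Nat.sub_add_cancel hk
        have := hstep (k - m) B hB0 (fun j => ih (k - m + j)
          (by have := j.2; omega))
        rw [hkm] at this
        exact le_trans this (hφ_le B hB0)
  have hiter_nonneg : ∀ p, 0 ≤ φ^[p] B := by
    intro p
    induction p with
    | zero => simpa using hB0
    | succ p ih => rw [Function.iterate_succ_apply']; exact hφ_nonneg _ ih
  have hclaim : ∀ p k, p * m ≤ k → d k ≤ φ^[p] B := by
    intro p
    induction p with
    | zero => intro k _; simpa using hbound k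
    | succ p ih =>
      intro k hk
      have hk' : p * m + m ≤ k := by rwa [Nat.succ_mul] at hk
      have hkm : m ≤ k := le_trans (Nat.le_add_left m (p * m)) hk'
      have hkmm : k - m + m = k := Nat.sub_add_cancel hkm
      have hwin : ∀ j : Fin m, d (k - m + j) ≤ φ^[p] B := by
        intro j
        exact ih _ (by omega)
      have := hstep (k - m) (φ^[p] B) (hiter_nonneg p) hwin
      rw [hkmm] at this
      rw [Function.iterate_succ_apply']
      exact this
  -- conclude
  rw [Metric.tendsto_atTop]
  intro ε hε
  have hdist : ∀ k, dist (K k) A = d k := fun k => Metric.NonemptyCompacts.dist_eq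
  rcases eq_or_lt_of_le hB0 with hBeq | hBpos
  · refine ⟨0, fun k _ => ?_⟩
    rw [hdist k]
    exact lt_of_le_of_lt (le_trans (hbound k) (le_of_eq hBeq.symm)) hε
  · obtain ⟨p, hp⟩ := (Metric.tendsto_atTop.1 (hφ_iter B hBpos)) ε hε
    refine ⟨p * m, fun k hk => ?_⟩
    rw [hdist k]
    have := hp p le_rfl
    rw [Real.dist_eq, sub_zero, abs_of_nonneg (hiter_nonneg p)] at this
    exact lt_of_le_of_lt (hclaim p k hk) this
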